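/- Let X = X_b(m, n, a, b, ℓ) as in Construction 3.4 with n ≥ 12 and a ≢ 1 (mod n). Then the 10 vertices (2,3), (2,2), (1,2), (1,1), (1,0), (0,0), (0,1), (1,a), (1,a+1), (1,a+2) are pairwise distinct and form a cycle of length 10 in X (each consecutive pair is adjacent and (1, a+2) is adjacent to (2,3)). Consequently the girth of X is at most 10. -/

import Mathlib

/-- The generating relation for the graph `X_b(m, n, a, b, ℓ)` of Construction 3.4
(case `ℓ` even). -/
def XbRel (m n : ℕ) (a b ℓ : ZMod n) (p q : ZMod m × ZMod n) : Prop :=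
  (p.1 = q.1 ∧ (q.2 = p.2 + 1 ∨ p.2 = q.2 + 1)) ∨
  (∃ i j0 δ : ℕ, i ≤ m - 2 ∧ j0 < n / 4 ∧ δ ≤ 1 ∧
    p = ((i : ZMod m), ((2 * i + 4 * j0 + δ : ℕ) : ZMod n)) ∧
    q = (((i + 1 : ℕ) : ZMod m),
      ((2 * i : ℕ) : ZMod n) + b * (j0 : ZMod n) + (δ : ZMod n) * a)) ∨
  (∃ j0 δ : ℕ, j0 < n / 4 ∧ δ ≤ 1 ∧
    p = (((m - 1 : ℕ) : ZMod m), ((2 * (m - 1) + 4 * j0 + δ : ℕ) : ZMod n)) ∧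
    q = ((0 : ZMod m), ℓ + b * (j0 : ZMod n) + (δ : ZMod n) * a))

/-- The graph `X_b(m, n, a, b, ℓ)` of Construction 3.4 (case `ℓ` even). -/
def Xb (m n : ℕ) (a b ℓ : ZMod n) : SimpleGraph (ZMod m × ZMod n) :=
  SimpleGraph.fromRel (XbRel m n a b ℓ)

/-- if `n ≥ 12` and `a ≠ 1`, then the ten listed vertices are
pairwise distinct and form a 10-cycle in `X_b(m, n, a, b, ℓ)`; consequently the
girth of the graph is at most `10`. -/
theorem stmt11 (m n0 : ℕ) (hm : 3 ≤ m) (hn0 : 3 ≤ n0) (a0 b0 ℓ0 : ℕ)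
    (hb0 : 1 ≤ b0) (hb0n : b0 < n0) (hgcd : Nat.gcd n0 b0 = 1) (ha0 : a0 < n0)
    (a b ℓ : ZMod (4 * n0))
    (hadef : a = ((4 * a0 + 1 : ℕ) : ZMod (4 * n0)))
    (hbdef : b = ((4 * b0 : ℕ) : ZMod (4 * n0)))
    (hldef : ℓ = ((4 * ℓ0 + 2 : ℕ) : ZMod (4 * n0)))
    (hbb0 : b * (b0 : ZMod (4 * n0)) = 4)
    (hba0 : b * (a0 : ZMod (4 * n0)) + a = 1)
    (hane1 : a ≠ 1) :
    ([((2 : ZMod m), (3 : ZMod (4 * n0))), (2, 2), (1, 2), (1, 1), (1, 0),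
        (0, 0), (0, 1), (1, a), (1, a + 1), (1, a + 2)]).Pairwise (· ≠ ·) ∧
    List.Chain' (Xb m (4 * n0) a b ℓ).Adj
      [((2 : ZMod m), (3 : ZMod (4 * n0))), (2, 2), (1, 2), (1, 1), (1, 0),
        (0, 0), (0, 1), (1, a), (1, a + 1), (1, a + 2)] ∧
    (Xb m (4 * n0) a b ℓ).Adj (1, a + 2) (2, 3) ∧
    (Xb m (4 * n0) a b ℓ).girth ≤ 10 := by
  have KEY : ∀ x y : ℕ, x < 4 * n0 → y < 4 * n0 →
      (((x : ZMod (4 * n0)) = (y : ZMod (4 * n0))) ↔ x = y) := by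
    intro x y hx hy
    rw [ZMod.natCast_eq_natCast_iff, Nat.ModEq, Nat.mod_eq_of_lt hx, Nat.mod_eq_of_lt hy]
  have KEYm : ∀ x y : ℕ, x < m → y < m →
      (((x : ZMod m) = (y : ZMod m)) ↔ x = y) := by
    intro x y hx hy
    rw [ZMod.natCast_eq_natCast_iff, Nat.ModEq, Nat.mod_eq_of_lt hx, Nat.mod_eq_of_lt hy]
  have ha0pos : 1 ≤ a0 := by
    by_contra h
    push_neg at h
    apply hane1
    rw [hadef]
    interval_cases a0
    norm_num
  have e0 : (0 : ZMod (4 * n0)) = ((0 : ℕ) : ZMod (4 * n0)) := by norm_cast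
  have e1 : (1 : ZMod (4 * n0)) = ((1 : ℕ) : ZMod (4 * n0)) := by norm_cast
  have e2 : (2 : ZMod (4 * n0)) = ((2 : ℕ) : ZMod (4 * n0)) := by norm_cast
  have e3 : (3 : ZMod (4 * n0)) = ((3 : ℕ) : ZMod (4 * n0)) := by norm_cast
  have f0 : (0 : ZMod m) = ((0 : ℕ) : ZMod m) := by norm_cast
  have f1 : (1 : ZMod m) = ((1 : ℕ) : ZMod m) := by norm_cast
  have f2 : (2 : ZMod m) = ((2 : ℕ) : ZMod m) := by norm_cast
  have F12 : (1 : ZMod m) ≠ 2 := by rw [f1, f2, Ne, KEYm 1 2 (by omega) (by omega)]; omega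
  have F01 : (0 : ZMod m) ≠ 1 := by rw [f0, f1, Ne, KEYm 0 1 (by omega) (by omega)]; omega
  have S32 : (3 : ZMod (4 * n0)) ≠ 2 := by rw [e3, e2, Ne, KEY 3 2 (by omega) (by omega)]; omega
  have S21 : (2 : ZMod (4 * n0)) ≠ 1 := by rw [e2, e1, Ne, KEY 2 1 (by omega) (by omega)]; omega
  have S10 : (1 : ZMod (4 * n0)) ≠ 0 := by rw [e1, e0, Ne, KEY 1 0 (by omega) (by omega)]; omega
  have Saa1 : a ≠ a + 1 := fun h => S10 (left_eq_add.mp h).symm.symm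
  have Sa1a2 : a + 1 ≠ a + 2 := by
    intro h
    have h' : (1 : ZMod (4 * n0)) = 2 := add_left_cancel h
    exact S21 h'.symm
  have hfr := SimpleGraph.fromRel_adj (XbRel m (4 * n0) a b ℓ)
  have A1 : (Xb m (4 * n0) a b ℓ).Adj (2, 3) (2, 2) := by
    refine (hfr _ _).2 ⟨fun h => S32 (Prod.ext_iff.1 h).2, Or.inl (Or.inl ⟨rfl, Or.inr ?_⟩)⟩
    norm_num
  have A3 : (Xb m (4 * n0) a b ℓ).Adj (1, 2) (1, 1) := by
    refine (hfr _ _).2 ⟨fun h => S21 (Prod.ext_iff.1 h).2, Or.inl (Or.inl ⟨rfl, Or.inr ?_⟩)⟩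
    norm_num
  have A4 : (Xb m (4 * n0) a b ℓ).Adj (1, 1) (1, 0) := by
    refine (hfr _ _).2 ⟨fun h => S10 (Prod.ext_iff.1 h).2, Or.inl (Or.inl ⟨rfl, Or.inr ?_⟩)⟩
    norm_num
  have A6 : (Xb m (4 * n0) a b ℓ).Adj (0, 0) (0, 1) := by
    refine (hfr _ _).2 ⟨fun h => S10 ((Prod.ext_iff.1 h).2).symm, Or.inl (Or.inl ⟨rfl, Or.inl ?_⟩)⟩
    norm_num
  have A8 : (Xb m (4 * n0) a b ℓ).Adj (1, a) (1, a + 1) := by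
    exact (hfr _ _).2 ⟨fun h => Saa1 (Prod.ext_iff.1 h).2, Or.inl (Or.inl ⟨rfl, Or.inl rfl⟩)⟩
  have A9 : (Xb m (4 * n0) a b ℓ).Adj (1, a + 1) (1, a + 2) := by
    refine (hfr _ _).2 ⟨fun h => Sa1a2 (Prod.ext_iff.1 h).2, Or.inl (Or.inl ⟨rfl, Or.inl ?_⟩)⟩
    ring
  have A2 : (Xb m (4 * n0) a b ℓ).Adj (1, 2) (2, 2) := by
    refine (hfr _ _).2 ⟨fun h => F12 (Prod.ext_iff.1 h).1,
      Or.inl (Or.inr (Or.inl ⟨1, 0, 0, by omega, by omega, by omega, ?_, ?_⟩))⟩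
    · norm_num
    · push_cast; norm_num
  have A5 : (Xb m (4 * n0) a b ℓ).Adj (0, 0) (1, 0) := by
    refine (hfr _ _).2 ⟨fun h => F01 (Prod.ext_iff.1 h).1,
      Or.inl (Or.inr (Or.inl ⟨0, 0, 0, by omega, by omega, by omega, ?_, ?_⟩))⟩
    · norm_num
    · push_cast; norm_num
  have A7 : (Xb m (4 * n0) a b ℓ).Adj (0, 1) (1, a) := by
    refine (hfr _ _).2 ⟨fun h => F01 (Prod.ext_iff.1 h).1,
      Or.inl (Or.inr (Or.inl ⟨0, 0, 1, by omega, by omega, by omega, ?_, ?_⟩))⟩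
    · norm_num
    · push_cast; norm_num
  have A10 : (Xb m (4 * n0) a b ℓ).Adj (1, a + 2) (2, 3) := by
    refine (hfr _ _).2 ⟨fun h => F12 (Prod.ext_iff.1 h).1,
      Or.inl (Or.inr (Or.inl ⟨1, a0, 1, by omega, by omega, by omega, ?_, ?_⟩))⟩
    · refine Prod.ext (by norm_num) ?_
      show a + 2 = ((2 * 1 + 4 * a0 + 1 : ℕ) : ZMod (4 * n0))
      rw [hadef]; push_cast; ring
    · refine Prod.ext (by norm_num) ?_
      show (3 : ZMod (4 * n0)) = ((2 * 1 : ℕ) : ZMod (4 * n0)) + b * (a0 : ZMod (4 * n0)) + ((1 : ℕ) : ZMod (4 * n0)) * a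
      push_cast
      rw [one_mul, add_assoc, hba0]
      norm_num
  -- pairwise
  refine ⟨?_, ?_, A10, ?_⟩
  · simp (disch := omega) only [List.pairwise_cons, List.forall_mem_cons, List.forall_mem_nil,
      List.Pairwise.nil, ne_eq, Prod.mk.injEq, not_and, hadef, e0, e1, e2, e3, f0, f1, f2,
      ← Nat.cast_add, KEY, KEYm, and_true, true_and, List.not_mem_nil, false_implies,
      implies_true]
    omega
  · simp only [List.Chain', List.isChain_cons_cons, List.isChain_singleton, and_true]
    exact ⟨A1, A2.symm, A3, A4, A5.symm, A6, A7, A8, A9⟩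
  · let w : (Xb m (4 * n0) a b ℓ).Walk ((2 : ZMod m), (3 : ZMod (4 * n0)))
        ((2 : ZMod m), (3 : ZMod (4 * n0))) :=
      SimpleGraph.Walk.cons A1 (.cons A2.symm (.cons A3 (.cons A4 (.cons A5.symm (.cons A6
        (.cons A7 (.cons A8 (.cons A9 (.cons A10 .nil)))))))))
    have hlen : w.length = 10 := rfl
    have hcyc : w.IsCycle := by
      rw [SimpleGraph.Walk.isCycle_def]
      refine ⟨?_, fun h => by rw [h] at hlen; exact absurd hlen (by simp), ?_⟩
      · rw [SimpleGraph.Walk.isTrail_def]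
        simp (disch := omega) only [w, SimpleGraph.Walk.edges_cons, SimpleGraph.Walk.edges_nil,
          List.nodup_cons, List.nodup_nil, List.mem_cons, List.not_mem_nil, or_false,
          Sym2.eq_iff, Prod.mk.injEq, not_or, not_and, hadef, e0, e1, e2, e3, f0, f1, f2,
          ← Nat.cast_add, KEY, KEYm, and_true, true_and, not_false_eq_true]
        and_intros <;> omega
      · simp (disch := omega) only [w, SimpleGraph.Walk.support_cons, SimpleGraph.Walk.support_nil,
          List.tail_cons, List.nodup_cons, List.nodup_nil, List.mem_cons, List.not_mem_nil,
          or_false, Prod.mk.injEq, not_or, not_and, hadef, e0, e1, e2, e3, f0, f1, f2,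
          ← Nat.cast_add, KEY, KEYm, and_true, true_and, not_false_eq_true]
        and_intros <;> omega
    have hE : (Xb m (4 * n0) a b ℓ).egirth ≤ 10 := by
      have h1 : (Xb m (4 * n0) a b ℓ).egirth ≤ (w.length : ℕ∞) := by
        apply iInf_le_of_le ((2 : ZMod m), (3 : ZMod (4 * n0)))
        apply iInf_le_of_le w
        exact iInf_le _ hcyc
      rw [hlen] at h1
      exact_mod_cast h1
    show (Xb m (4 * n0) a b ℓ).egirth.toNat ≤ 10
    exact ENat.toNat_le_of_le_coe (by exact_mod_cast hE)
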